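/- Let R be a non-integer real number with R > 0, let p be a polynomial with real coefficients, p(t) = ∑_{m=0}^{d} a_m t^m, and let x > 0 be real. Then, along the coupled sequence h = x/N, the Grünwald–Letnikov derivative of order R of p recovers the Riemann–Liouville derivative of p: lim_{N→∞} (x/N)^{-R} ∑_{k=0}^{N} (-1)^k C(R,k) p(x - k·x/N) = ∑_{m=0}^{d} a_m · Γ(m+1)/Γ(m-R+1) · x^{m-R}. -/

import Mathlib

open Finset Filter Real

/-- Generalized binomial coefficient C(R,k) = R(R-1)⋯(R-k+1)/k! for real R and natural k. -/
noncomputable def genBinom (R : ℝ) (k : ℕ) : ℝ :=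
  (∏ i ∈ Finset.range k, (R - i)) / (Nat.factorial k)

lemma genBinom_pascal (S : ℝ) (k : ℕ) :
    genBinom S (k+1) = genBinom (S-1) (k+1) + genBinom (S-1) k := by
  unfold genBinom
  have h1 : ∏ i ∈ Finset.range (k+1), (S - i) = (∏ i ∈ Finset.range k, (S - 1 - i)) * S := by
    rw [Finset.prod_range_succ']
    congr 1
    · exact Finset.prod_congr rfl (fun i _ => by push_cast; ring)
    · simp
  have h2 : ∏ i ∈ Finset.range (k+1), (S - 1 - i) =
      (∏ i ∈ Finset.range k, (S - 1 - i)) * (S - 1 - k) := Finset.prod_range_succ _ _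
  rw [h1, h2, Nat.factorial_succ]
  have hk : ((k+1) * Nat.factorial k : ℝ) ≠ 0 := by positivity
  push_cast
  field_simp
  ring

lemma alt_sum (S : ℝ) (N : ℕ) :
    ∑ n ∈ Finset.range (N+1), (-1:ℝ)^n * genBinom S n = (-1)^N * genBinom (S-1) N := by
  induction N with
  | zero => simp [genBinom]
  | succ N ih =>
    rw [Finset.sum_range_succ, ih, genBinom_pascal]
    ring

lemma hockey (m : ℕ) : ∀ t : ℕ, ∑ i ∈ Finset.range (t+1), (i+m).choose m = (t+m+1).choose (m+1) := by
  intro t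
  induction t with
  | zero => simp
  | succ t ih =>
    rw [Finset.sum_range_succ, ih, show t+1+m = t+m+1 by omega]
    have h := Nat.choose_succ_succ (t+m+1) m
    simp only [Nat.succ_eq_add_one] at h ⊢
    omega

lemma conv (R : ℝ) (m : ℕ) : ∀ N : ℕ,
    ∑ k ∈ Finset.range (N+1), (-1:ℝ)^k * genBinom R k * ((N-k+m).choose m : ℝ)
      = (-1)^N * genBinom (R - m - 1) N := by
  induction m with
  | zero =>
    intro N
    simpa using alt_sum R N
  | succ m ih =>
    intro N
    have key : ∀ k ∈ Finset.range (N+1),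
        (-1:ℝ)^k * genBinom R k * ((N-k+(m+1)).choose (m+1) : ℝ)
        = ∑ n ∈ Finset.Ico k (N+1), (-1:ℝ)^k * genBinom R k * ((n-k+m).choose m : ℝ) := by
      intro k hk
      rw [Finset.mem_range] at hk
      have hkN : k ≤ N := Nat.lt_succ_iff.mp hk
      have h1 : (N-k+(m+1)).choose (m+1) = ∑ i ∈ Finset.range (N-k+1), (i+m).choose m := by
        rw [hockey m (N-k), show N - k + (m+1) = N - k + m + 1 from rfl]
      rw [h1]
      push_cast
      rw [Finset.mul_sum, Finset.sum_Ico_eq_sum_range,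
        show N + 1 - k = N - k + 1 by omega]
      refine Finset.sum_congr rfl fun i _ => ?_
      rw [show k + i - k + m = i + m by omega]
    rw [Finset.sum_congr rfl key]
    rw [Finset.range_eq_Ico, Finset.sum_Ico_Ico_comm]
    have inner : ∀ n ∈ Finset.Ico 0 (N+1),
        (∑ k ∈ Finset.Ico 0 (n+1), (-1:ℝ)^k * genBinom R k * ((n-k+m).choose m : ℝ))
          = (-1:ℝ)^n * genBinom (R - m - 1) n := by
      intro n _
      rw [← Finset.range_eq_Ico]
      exact ih n
    rw [Finset.sum_congr rfl inner, ← Finset.range_eq_Ico]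
    have := alt_sum (R - m - 1) N
    rw [this]
    congr 2
    push_cast
    ring

lemma tendsto_aux (s : ℝ) (hs : Real.Gamma s ≠ 0) :
    Tendsto (fun N : ℕ => (N:ℝ)^(1-s) * (∏ i ∈ Finset.range N, (s+i)) / (Nat.factorial N))
      atTop (nhds (1 / Real.Gamma s)) := by
  have hG := Real.GammaSeq_tendsto_Gamma s
  have h1 : Tendsto (fun n : ℕ => ((n:ℝ)/(n+1)) ^ s) atTop (nhds 1) := by
    have hb : Tendsto (fun n : ℕ => (n:ℝ)/(n+1)) atTop (nhds 1) := by
      have := tendsto_natCast_div_add_atTop (1:ℝ)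
      exact this
    have hc : ContinuousAt (fun y : ℝ => y ^ s) 1 :=
      (Real.continuousAt_rpow_const 1 s (Or.inl one_ne_zero))
    simpa [Function.comp_def] using hc.tendsto.comp hb
  have h2 : Tendsto (fun n : ℕ => ((n:ℝ)/(n+1)) ^ s / Real.GammaSeq s n) atTop
      (nhds (1 / Real.Gamma s)) := h1.div hG hs
  rw [← tendsto_add_atTop_iff_nat 1]
  apply h2.congr'
  filter_upwards [eventually_ge_atTop 1] with n hn
  have hn0 : (0:ℝ) < n := by exact_mod_cast hn
  have hn1 : (0:ℝ) < (n:ℝ)+1 := by positivity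
  have hprod : ∏ i ∈ Finset.range (n+1), (s+i) = ∏ j ∈ Finset.range (n+1), (s+j) := rfl
  rw [Real.GammaSeq]
  have hfac : (Nat.factorial (n+1) : ℝ) = ((n:ℝ)+1) * Nat.factorial n := by
    rw [Nat.factorial_succ]; push_cast; ring
  push_cast
  rw [hfac]
  rw [Real.div_rpow (le_of_lt hn0) (le_of_lt hn1)]
  rw [Real.rpow_sub hn1, Real.rpow_one]
  have e1 : ((n:ℝ))^s ≠ 0 := ne_of_gt (Real.rpow_pos_of_pos hn0 s)
  have e2 : ((n:ℝ)+1)^s ≠ 0 := ne_of_gt (Real.rpow_pos_of_pos hn1 s)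
  have hsj : ∀ j : ℕ, s + j ≠ 0 := by
    intro j h
    apply hs
    rw [show s = -(j:ℝ) by linarith, Real.Gamma_neg_nat_eq_zero]
  have hP : (∏ j ∈ Finset.range (n+1), (s+j)) ≠ 0 :=
    Finset.prod_ne_zero_iff.mpr fun j _ => hsj j
  have hfn : (Nat.factorial n : ℝ) ≠ 0 := by positivity
  field_simp

lemma gamma_ne (R : ℝ) (hR : ∀ n : ℤ, R ≠ (n:ℝ)) (m : ℕ) : Real.Gamma ((m:ℝ)+1-R) ≠ 0 := by
  apply Real.Gamma_ne_zero
  intro j h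
  exact hR (m+1+j) (by push_cast; linarith)

lemma tendsto_B (R : ℝ) (hR : ∀ n : ℤ, R ≠ (n:ℝ)) (m : ℕ) :
    Tendsto (fun N : ℕ => (N:ℝ)^(R - (m:ℝ)) * ((-1:ℝ)^N * genBinom (R - m - 1) N))
      atTop (nhds (1 / Real.Gamma ((m:ℝ)+1-R))) := by
  have h := tendsto_aux ((m:ℝ)+1-R) (gamma_ne R hR m)
  apply h.congr
  intro N
  have h1 : ∏ i ∈ Finset.range N, ((m:ℝ)+1-R+i) = (-1:ℝ)^N * ∏ i ∈ Finset.range N, (R - m - 1 - i) := by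
    have e : ∏ i ∈ Finset.range N, ((m:ℝ)+1-R+i) = ∏ i ∈ Finset.range N, ((-1) * (R - m - 1 - i)) :=
      Finset.prod_congr rfl fun i _ => by ring
    rw [e, Finset.prod_mul_distrib, Finset.prod_const, Finset.card_range]
  rw [show (1 - ((m:ℝ)+1-R)) = R - (m:ℝ) by ring, h1, genBinom]
  ring

section
open Polynomial

lemma decomp (m : ℕ) : ∃ c : ℕ → ℝ, ∀ y : ℕ,
    (y:ℝ)^m = (Nat.factorial m : ℝ) * ((y+m).choose m : ℝ) + ∑ j ∈ Finset.range m, c j * (y:ℝ)^j := by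
  set P : ℝ[X] := ∏ i ∈ Finset.range m, (X + C ((i:ℝ)+1)) with hP
  have hPm : P.Monic := monic_prod_of_monic _ _ (fun i _ => monic_X_add_C _)
  have hPdeg : P.natDegree = m := by
    rw [hP, natDegree_prod _ _ (fun i _ => (monic_X_add_C _).ne_zero)]
    rw [Finset.sum_congr rfl (fun i (_ : i ∈ Finset.range m) => natDegree_X_add_C ((i:ℝ)+1)),
      Finset.sum_const, Finset.card_range, smul_eq_mul, mul_one]
  set q : ℝ[X] := X^m - P with hq
  have hPeval : ∀ y : ℕ, P.eval (y:ℝ) = (Nat.factorial m : ℝ) * ((y+m).choose m : ℝ) := by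
    intro y
    rw [hP, eval_prod]
    have : ∏ i ∈ Finset.range m, ((X + C ((i:ℝ)+1)).eval (y:ℝ)) = ∏ i ∈ Finset.range m, ((y:ℝ) + i + 1) := by
      refine Finset.prod_congr rfl fun i _ => ?_
      simp [eval_add, eval_X, eval_C]; ring
    rw [this]
    have hnat : (y+1).ascFactorial m = Nat.factorial m * (y+m).choose m :=
      Nat.ascFactorial_eq_factorial_mul_choose y m
    have hprod : ∀ n : ℕ, ∏ i ∈ Finset.range n, ((y:ℝ) + i + 1) = ((y+1).ascFactorial n : ℝ) := by
      intro n
      induction n with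
      | zero => simp
      | succ n ihn =>
        rw [Finset.prod_range_succ, ihn, Nat.ascFactorial_succ]
        push_cast
        ring
    rw [hprod, hnat]
    push_cast
    ring
  refine ⟨fun j => q.coeff j, fun y => ?_⟩
  have hyq : (y:ℝ)^m = P.eval (y:ℝ) + q.eval (y:ℝ) := by
    rw [hq]; simp [eval_sub, eval_pow, eval_X]
  rw [hyq, hPeval y]
  congr 1
  by_cases h0 : q = 0
  · simp [h0]
  · have hdeg : q.degree < (m : WithBot ℕ) := by
      rw [hq]
      have := degree_sub_lt (p := X^m) (q := P) ?_ (by exact pow_ne_zero m X_ne_zero) ?_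
      · rwa [degree_X_pow] at this
      · rw [degree_X_pow, (Polynomial.degree_eq_natDegree hPm.ne_zero).trans (by rw [hPdeg])]
      · rw [leadingCoeff_X_pow, hPm.leadingCoeff]
    have hnd : q.natDegree < m := by
      exact (Polynomial.natDegree_lt_iff_degree_lt h0).mpr hdeg
    exact Polynomial.eval_eq_sum_range' hnd _

end

lemma tendsto_S (R : ℝ) (hR : ∀ n : ℤ, R ≠ (n:ℝ)) (m : ℕ) :
    Tendsto (fun N : ℕ => (N:ℝ)^(R - (m:ℝ)) *
        ∑ k ∈ Finset.range (N+1), (-1:ℝ)^k * genBinom R k * ((N:ℝ) - k)^m)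
      atTop (nhds ((Nat.factorial m : ℝ) / Real.Gamma ((m:ℝ)+1-R))) := by
  induction m using Nat.strong_induction_on with
  | _ m ih =>
  obtain ⟨c, hc⟩ := decomp m
  -- pointwise decomposition of the sum
  have hsplit : ∀ N : ℕ,
      ∑ k ∈ Finset.range (N+1), (-1:ℝ)^k * genBinom R k * ((N:ℝ) - k)^m
        = (Nat.factorial m : ℝ) * ((-1:ℝ)^N * genBinom (R - m - 1) N)
          + ∑ j ∈ Finset.range m, c j *
              ∑ k ∈ Finset.range (N+1), (-1:ℝ)^k * genBinom R k * ((N:ℝ) - k)^j := by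
    intro N
    have step1 : ∀ k ∈ Finset.range (N+1),
        (-1:ℝ)^k * genBinom R k * ((N:ℝ) - k)^m
          = (Nat.factorial m : ℝ) * ((-1:ℝ)^k * genBinom R k * ((N-k+m).choose m : ℝ))
            + ∑ j ∈ Finset.range m, c j * ((-1:ℝ)^k * genBinom R k * ((N:ℝ) - k)^j) := by
      intro k hk
      rw [Finset.mem_range] at hk
      have hkN : k ≤ N := Nat.lt_succ_iff.mp hk
      have hcast : ((N:ℝ) - k) = ((N - k : ℕ) : ℝ) := by
        rw [Nat.cast_sub hkN]
      rw [hcast, hc (N - k), mul_add, Finset.mul_sum]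
      congr 1
      · ring
      · refine Finset.sum_congr rfl fun j _ => ?_
        ring
    rw [Finset.sum_congr rfl step1, Finset.sum_add_distrib, ← Finset.mul_sum, conv R m N]
    congr 1
    rw [Finset.sum_comm]
    refine Finset.sum_congr rfl fun j _ => ?_
    rw [Finset.mul_sum]
  have hB := (tendsto_B R hR m).const_mul (Nat.factorial m : ℝ)
  have hj : ∀ j ∈ Finset.range m,
      Tendsto (fun N : ℕ => c j * ((N:ℝ)^(R - (m:ℝ)) *
          ∑ k ∈ Finset.range (N+1), (-1:ℝ)^k * genBinom R k * ((N:ℝ) - k)^j))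
        atTop (nhds 0) := by
    intro j hj
    rw [Finset.mem_range] at hj
    have hpow : Tendsto (fun N : ℕ => (N:ℝ)^((j:ℝ) - (m:ℝ))) atTop (nhds 0) := by
      have hlt : (0:ℝ) < (m:ℝ) - (j:ℝ) := by
        have : (j:ℝ) < (m:ℝ) := by exact_mod_cast hj
        linarith
      have := (tendsto_rpow_neg_atTop hlt).comp tendsto_natCast_atTop_atTop
      simpa [Function.comp_def, neg_sub] using this
    have hmul := hpow.mul (ih j hj)
    rw [zero_mul] at hmul
    have : Tendsto (fun N : ℕ => (N:ℝ)^(R - (m:ℝ)) *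
        ∑ k ∈ Finset.range (N+1), (-1:ℝ)^k * genBinom R k * ((N:ℝ) - k)^j) atTop (nhds 0) := by
      apply hmul.congr'
      filter_upwards [eventually_ge_atTop 1] with N hN
      have hN0 : (0:ℝ) < N := by exact_mod_cast hN
      rw [← mul_assoc, ← Real.rpow_add hN0]
      ring_nf
    simpa using this.const_mul (c j)
  have hsum := tendsto_finset_sum (Finset.range m) hj
  rw [Finset.sum_const_zero] at hsum
  have htot := hB.add hsum
  rw [add_zero, mul_one_div] at htot
  apply htot.congr'
  filter_upwards with N
  rw [hsplit N, mul_add, Finset.mul_sum]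
  congr 1
  · ring
  · refine Finset.sum_congr rfl fun j _ => ?_
    ring

/-- For non-integer R > 0, a real polynomial p(t) = ∑_{m=0}^{d} a_m t^m, and x > 0,
    the Grünwald–Letnikov derivative of order R of p along the coupled sequence
    h = x/N recovers the Riemann–Liouville derivative
    ∑_{m=0}^{d} a_m Γ(m+1)/Γ(m-R+1) · x^{m-R}. -/
theorem coupled_GL_polynomial_principal_value (R : ℝ) (hR : ∀ n : ℤ, R ≠ (n : ℝ))
    (hR0 : 0 < R) (d : ℕ) (a : ℕ → ℝ) (x : ℝ) (hx : 0 < x) :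
    Filter.Tendsto
      (fun N : ℕ =>
        (x / N) ^ (-R) *
          ∑ k ∈ Finset.range (N + 1),
            (-1 : ℝ) ^ k * genBinom R k *
              ∑ m ∈ Finset.range (d + 1), a m * (x - k * (x / N)) ^ m)
      Filter.atTop
      (nhds (∑ m ∈ Finset.range (d + 1),
        a m * (Real.Gamma ((m : ℝ) + 1) / Real.Gamma ((m : ℝ) - R + 1)) * x ^ ((m : ℝ) - R))) := by
  have hterm : ∀ m ∈ Finset.range (d+1),
      Tendsto (fun N : ℕ => a m * (x ^ ((m:ℝ)-R) * ((N:ℝ)^(R-(m:ℝ)) *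
          ∑ k ∈ Finset.range (N+1), (-1:ℝ)^k * genBinom R k * ((N:ℝ) - k)^m)))
        atTop (nhds (a m * (Real.Gamma ((m : ℝ) + 1) / Real.Gamma ((m : ℝ) - R + 1)) * x ^ ((m : ℝ) - R))) := by
    intro m _
    have h := ((tendsto_S R hR m).const_mul (x ^ ((m:ℝ)-R))).const_mul (a m)
    have heq : a m * (x ^ ((m:ℝ)-R) * ((Nat.factorial m : ℝ) / Real.Gamma ((m:ℝ)+1-R)))
        = a m * (Real.Gamma ((m : ℝ) + 1) / Real.Gamma ((m : ℝ) - R + 1)) * x ^ ((m : ℝ) - R) := by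
      rw [show ((m:ℝ) - R + 1) = ((m:ℝ)+1-R) by ring, Real.Gamma_nat_eq_factorial]
      ring
    rw [heq] at h
    exact h.congr (fun N => by ring)
  have hsum := tendsto_finset_sum (Finset.range (d+1)) hterm
  apply hsum.congr'
  filter_upwards [eventually_ge_atTop 1] with N hN
  have hN0 : (0:ℝ) < N := by exact_mod_cast hN
  have hNne : (N:ℝ) ≠ 0 := ne_of_gt hN0
  have h0 : (x / (N:ℝ)) ^ (-R) = x ^ (-R) * (N:ℝ)^R := by
    rw [Real.div_rpow hx.le hN0.le, Real.rpow_neg hN0.le R, div_eq_mul_inv, inv_inv]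
  have hxm : ∀ m : ℕ, x ^ (m:ℕ) * x ^ (-R) = x ^ ((m:ℝ)-R) := by
    intro m
    rw [← Real.rpow_natCast x m, ← Real.rpow_add hx, sub_eq_add_neg]
  have hNm : ∀ m : ℕ, (N:ℝ)^R / (N:ℝ)^(m:ℕ) = (N:ℝ)^(R-(m:ℝ)) := by
    intro m
    rw [← Real.rpow_natCast (N:ℝ) m, ← Real.rpow_sub hN0]
  have key : ∀ k ∈ Finset.range (N+1), ∀ m ∈ Finset.range (d+1),
      (x / (N:ℝ)) ^ (-R) * (((-1:ℝ)^k * genBinom R k) * (a m * (x - k * (x / N)) ^ m))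
        = a m * (x ^ ((m:ℝ)-R) * ((N:ℝ)^(R-(m:ℝ)) * (((-1:ℝ)^k * genBinom R k) * ((N:ℝ) - k)^m))) := by
    intro k _ m _
    have hxk : x - (k:ℝ) * (x / N) = x * ((N:ℝ) - k) / N := by
      field_simp
    rw [hxk, div_pow, mul_pow, h0, ← hxm m, ← hNm m]
    field_simp
  symm
  calc (x / (N:ℝ)) ^ (-R) *
        ∑ k ∈ Finset.range (N + 1), (-1 : ℝ) ^ k * genBinom R k *
          ∑ m ∈ Finset.range (d + 1), a m * (x - k * (x / N)) ^ m
      = ∑ k ∈ Finset.range (N + 1), ∑ m ∈ Finset.range (d + 1),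
          (x / (N:ℝ)) ^ (-R) * (((-1:ℝ)^k * genBinom R k) * (a m * (x - k * (x / N)) ^ m)) := by
        rw [Finset.mul_sum]
        refine Finset.sum_congr rfl fun k _ => ?_
        rw [Finset.mul_sum, Finset.mul_sum]
    _ = ∑ k ∈ Finset.range (N + 1), ∑ m ∈ Finset.range (d + 1),
          a m * (x ^ ((m:ℝ)-R) * ((N:ℝ)^(R-(m:ℝ)) * (((-1:ℝ)^k * genBinom R k) * ((N:ℝ) - k)^m))) := by
        refine Finset.sum_congr rfl fun k hk => Finset.sum_congr rfl fun m hm => key k hk m hm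
    _ = ∑ m ∈ Finset.range (d + 1), a m * (x ^ ((m:ℝ)-R) * ((N:ℝ)^(R-(m:ℝ)) *
          ∑ k ∈ Finset.range (N+1), (-1:ℝ)^k * genBinom R k * ((N:ℝ) - k)^m)) := by
        rw [Finset.sum_comm]
        refine Finset.sum_congr rfl fun m _ => ?_
        simp only [← Finset.mul_sum]
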